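/- For any POVM M = {M_x} on ℂ^d with at most k outcomes, the trace norm of its measurement information channel satisfies ‖H_M‖₁ = Σ_x Tr[M_x²]/Tr[M_x] ≤ min{k, d}. -/

import Mathlib

open Matrix
open scoped ComplexOrder



lemma trace_eq_sum_eig {d : ℕ} {A : Matrix (Fin d) (Fin d) ℂ} (hA : A.IsHermitian) :
    A.trace = ∑ i, (hA.eigenvalues i : ℂ) := by
  conv_lhs => rw [hA.spectral_theorem]
  rw [Unitary.conjStarAlgAut_apply]
  rw [Matrix.trace_mul_cycle]
  simp [Matrix.trace_diagonal]

lemma trace_sq_eq_sum_eig {d : ℕ} {A : Matrix (Fin d) (Fin d) ℂ} (hA : A.IsHermitian) :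
    (A * A).trace = ∑ i, ((hA.eigenvalues i : ℂ))^2 := by
  conv_lhs => rw [hA.spectral_theorem]
  rw [Unitary.conjStarAlgAut_apply]
  have hU : (star (hA.eigenvectorUnitary : Matrix (Fin d) (Fin d) ℂ)) *
      (hA.eigenvectorUnitary : Matrix (Fin d) (Fin d) ℂ) = 1 :=
    Unitary.coe_star_mul_self _
  calc ((hA.eigenvectorUnitary : Matrix (Fin d) (Fin d) ℂ) * diagonal (RCLike.ofReal ∘ hA.eigenvalues)
      * (star (hA.eigenvectorUnitary : Matrix (Fin d) (Fin d) ℂ)) *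
      ((hA.eigenvectorUnitary : Matrix (Fin d) (Fin d) ℂ) * diagonal (RCLike.ofReal ∘ hA.eigenvalues)
      * (star (hA.eigenvectorUnitary : Matrix (Fin d) (Fin d) ℂ)))).trace
      = ((hA.eigenvectorUnitary : Matrix (Fin d) (Fin d) ℂ) *
        (diagonal (RCLike.ofReal ∘ hA.eigenvalues) * diagonal (RCLike.ofReal ∘ hA.eigenvalues))
        * (star (hA.eigenvectorUnitary : Matrix (Fin d) (Fin d) ℂ))).trace := by
        rw [show ∀ U D : Matrix (Fin d) (Fin d) ℂ, U * D * star U * (U * D * star U)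
            = U * (D * (star U * U) * D) * star U from fun U D => by noncomm_ring, hU]
        noncomm_ring
    _ = ∑ i, ((hA.eigenvalues i : ℂ))^2 := by
        rw [Matrix.trace_mul_cycle, ← Matrix.mul_assoc, hU, Matrix.one_mul,
          diagonal_mul_diagonal, Matrix.trace_diagonal]
        simp [sq]

lemma eig_le_one {d : ℕ} {A : Matrix (Fin d) (Fin d) ℂ} (hA : A.IsHermitian)
    (h1 : (1 - A).PosSemidef) (i : Fin d) : hA.eigenvalues i ≤ 1 := by
  set v := ⇑(hA.eigenvectorBasis i) with hv
  have hvv : dotProduct (star v) v = 1 := by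
    have h := hA.eigenvectorBasis.orthonormal.1 i
    have h2 : (inner ℂ (hA.eigenvectorBasis i) (hA.eigenvectorBasis i) : ℂ) = 1 := by
      rw [inner_self_eq_norm_sq_to_K, h]; simp
    rw [EuclideanSpace.inner_eq_star_dotProduct] at h2
    rw [dotProduct_comm] at h2
    exact h2
  have key := h1.dotProduct_mulVec_nonneg v
  rw [sub_mulVec, Matrix.one_mulVec, hA.mulVec_eigenvectorBasis, dotProduct_sub,
    dotProduct_smul, hvv] at key
  have : (0:ℂ) ≤ 1 - (hA.eigenvalues i : ℂ) := by
    convert key using 1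
    simp [smul_eq_mul]
  have hre := Complex.le_def.mp this |>.1
  simp at hre
  linarith


/-- Column-stacking vectorization: `vec(M) (j,i) = M i j`. -/
def vec {d : ℕ} (M : Matrix (Fin d) (Fin d) ℂ) : Fin d × Fin d → ℂ :=
  fun p => M p.2 p.1

/-- Matrix representation of the measurement information channel of a POVM `{M_x}`;
its trace norm equals its trace since it is positive semidefinite. -/
noncomputable def micMatrix {d : ℕ} {X : Type*} [Fintype X]
    (M : X → Matrix (Fin d) (Fin d) ℂ) : Matrix (Fin d × Fin d) (Fin d × Fin d) ℂ :=
  fun p q => ∑ x, _root_.vec (M x) p * star (_root_.vec (M x) q) / (M x).trace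

theorem mic_traceNorm_le_min_outcomes_dim {d k : ℕ} {X : Type*} [Fintype X]
    (M : X → Matrix (Fin d) (Fin d) ℂ)
    (hpsd : ∀ x, (M x).PosSemidef) (hsum : ∑ x, M x = 1)
    (hk : Fintype.card X ≤ k) :
    (micMatrix M).trace = ∑ x, (M x * M x).trace / (M x).trace ∧
    ∑ x, ((M x * M x).trace.re / (M x).trace.re) ≤ min k d := by
  classical
  have hH : ∀ x, (M x).IsHermitian := fun x => (hpsd x).isHermitian
  -- Part 1
  have key : ∀ x, ∑ p : Fin d × Fin d, _root_.vec (M x) p * star (_root_.vec (M x) p)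
      = (M x * M x).trace := by
    intro x
    have hstar : ∀ i j, M x j i = star (M x i j) := fun i j => by
      conv_lhs => rw [← hH x]
      rfl
    calc ∑ p : Fin d × Fin d, _root_.vec (M x) p * star (_root_.vec (M x) p)
        = ∑ j, ∑ i, M x i j * star (M x i j) := by
          rw [Fintype.sum_prod_type]; rfl
      _ = ∑ i, ∑ j, M x i j * star (M x i j) := Finset.sum_comm
      _ = (M x * M x).trace := by
          rw [Matrix.trace]
          simp only [Matrix.diag_apply, Matrix.mul_apply]
          exact Finset.sum_congr rfl fun i _ => Finset.sum_congr rfl fun j _ => by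
            rw [← hstar i j]
  have part1 : (micMatrix M).trace = ∑ x, (M x * M x).trace / (M x).trace := by
    rw [Matrix.trace]
    simp only [Matrix.diag_apply, micMatrix]
    rw [Finset.sum_comm]
    exact Finset.sum_congr rfl fun x _ => by rw [← Finset.sum_div, key x]
  refine ⟨part1, ?_⟩
  -- Part 2
  set L : (x : X) → Fin d → ℝ := fun x => (hH x).eigenvalues with hL
  have hL0 : ∀ x i, 0 ≤ L x i := fun x i => (hpsd x).eigenvalues_nonneg i
  have hL1 : ∀ x i, L x i ≤ 1 := by
    intro x i
    have hsub : (1 : Matrix (Fin d) (Fin d) ℂ) - M x = ∑ y ∈ Finset.univ.erase x, M y := by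
      have := Finset.sum_erase_add Finset.univ M (Finset.mem_univ x)
      rw [hsum] at this
      exact (eq_sub_iff_add_eq.mpr this).symm
    have hps : ((1 : Matrix (Fin d) (Fin d) ℂ) - M x).PosSemidef := by
      rw [hsub]
      exact Finset.sum_induction _ _ (fun a b ha hb => ha.add hb)
        Matrix.PosSemidef.zero (fun y _ => hpsd y)
    exact eig_le_one (hH x) hps i
  set t : X → ℝ := fun x => ∑ i, L x i with ht
  set s : X → ℝ := fun x => ∑ i, (L x i) ^ 2 with hs
  have htr : ∀ x, (M x).trace = ((t x : ℝ) : ℂ) := by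
    intro x; rw [trace_eq_sum_eig (hH x)]; simp only [ht, hL]; push_cast; rfl
  have htr2 : ∀ x, (M x * M x).trace = ((s x : ℝ) : ℂ) := by
    intro x; rw [trace_sq_eq_sum_eig (hH x)]; simp only [hs, hL]; push_cast; rfl
  have hre : ∀ x, (M x).trace.re = t x := fun x => by rw [htr x]; simp
  have hre2 : ∀ x, (M x * M x).trace.re = s x := fun x => by rw [htr2 x]; simp
  have ht0 : ∀ x, 0 ≤ t x := fun x => Finset.sum_nonneg fun i _ => hL0 x i
  have hst : ∀ x, s x ≤ t x := fun x => Finset.sum_le_sum fun i _ => by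
    nlinarith [hL0 x i, hL1 x i]
  have hst2 : ∀ x, s x ≤ (t x) ^ 2 := fun x =>
    Finset.sum_sq_le_sq_sum_of_nonneg fun i _ => hL0 x i
  have hs0 : ∀ x, 0 ≤ s x := fun x => Finset.sum_nonneg fun i _ => sq_nonneg _
  simp only [hre, hre2]
  have hterm1 : ∀ x, s x / t x ≤ 1 := by
    intro x
    rcases eq_or_lt_of_le (ht0 x) with h | h
    · have : s x = 0 := le_antisymm (by nlinarith [hst2 x]) (hs0 x)
      rw [this, ← h, zero_div]; norm_num
    · rw [div_le_one h]; exact hst x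
  have hterm2 : ∀ x, s x / t x ≤ t x := by
    intro x
    rcases eq_or_lt_of_le (ht0 x) with h | h
    · rw [← h, div_zero]
    · rw [div_le_iff₀ h, ← sq]; exact hst2 x
  have hsumt : ∑ x, t x = (d : ℝ) := by
    have : (∑ x, (M x).trace) = (1 : Matrix (Fin d) (Fin d) ℂ).trace := by
      rw [← Matrix.trace_sum, hsum]
    rw [Matrix.trace_one] at this
    have := congrArg Complex.re this
    simp only [htr] at this
    simpa using this
  rw [Nat.cast_min]
  refine le_min ?_ ?_
  · calc ∑ x, s x / t x ≤ ∑ x : X, (1 : ℝ) := Finset.sum_le_sum fun x _ => hterm1 x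
      _ = Fintype.card X := by simp
      _ ≤ k := by exact_mod_cast hk
  · calc ∑ x, s x / t x ≤ ∑ x, t x := Finset.sum_le_sum fun x _ => hterm2 x
      _ = d := hsumt
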